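/- Let n, m ≥ 3 and let M be the mn × mn (0,1)-matrix indexed by ZMod n × ZMod m whose ((i,j),(k,l))-entry is 1 exactly when (k,l) ∈ {(i,j), (i−1,j), (i,j−1), (i−1,j−1)} (the grid–face adjacency block of the Union Jack lattice UJL(n,m)). Then M·Mᵀ = (2·I_m + A(C_m)) ⊗ (2·I_n + A(C_n)), where A(C_n) denotes the adjacency matrix of the cycle C_n on ZMod n and ⊗ denotes the Kronecker product of matrices. -/

import Mathlib

open scoped Classical
open Matrix Kronecker

noncomputable section

/-- Vertex set of the Union Jack lattice `UJL(n,m)`: the first summand consists of the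
"grid vertices" of the `n × m` toroidal square lattice, the second summand of the
"face vertices" inserted in each face. -/
abbrev UJLVert (n m : ℕ) : Type := (ZMod n × ZMod m) ⊕ (ZMod n × ZMod m)

/-- Base adjacency relation of the Union Jack lattice (to be symmetrized):
grid vertex `(i,j)` is related to the grid vertices `(i+1,j)` and `(i,j+1)`
(symmetrization yields all four grid neighbours `(i±1,j)`, `(i,j±1)`), and the
grid vertex `(i,j)` is related to the face vertices `(i,j)`, `(i-1,j)`, `(i,j-1)`,
`(i-1,j-1)`, i.e. the face vertex `(k,l)` is adjacent to the grid vertices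
`(k,l)`, `(k+1,l)`, `(k,l+1)`, `(k+1,l+1)`. -/
def UJLRel (n m : ℕ) : UJLVert n m → UJLVert n m → Prop
  | Sum.inl p, Sum.inl q => (q.1 = p.1 + 1 ∧ q.2 = p.2) ∨ (q.1 = p.1 ∧ q.2 = p.2 + 1)
  | Sum.inl p, Sum.inr q =>
      (q.1 = p.1 ∧ q.2 = p.2) ∨ (q.1 = p.1 - 1 ∧ q.2 = p.2) ∨
        (q.1 = p.1 ∧ q.2 = p.2 - 1) ∨ (q.1 = p.1 - 1 ∧ q.2 = p.2 - 1)
  | _, _ => False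

/-- The Union Jack lattice `UJL(n,m)` with toroidal boundary condition. -/
def UJL (n m : ℕ) : SimpleGraph (UJLVert n m) := SimpleGraph.fromRel (UJLRel n m)

/-- `cos α_i` where `α_i = 2 π i / n`. -/
def cosα (n i : ℕ) : ℝ := Real.cos (2 * Real.pi * i / n)

/-- The cycle `C_n` on `ZMod n`: `i` is adjacent to `i + 1` and `i - 1`. -/
def cycleGraph (n : ℕ) : SimpleGraph (ZMod n) := SimpleGraph.fromRel (fun i k => k = i + 1)

def Fmat (n : ℕ) : Matrix (ZMod n) (ZMod n) ℝ :=
  Matrix.of fun i a => if a = i ∨ a = i - 1 then 1 else 0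

lemma FFt (n : ℕ) (hn : 3 ≤ n) [NeZero n] :
    Fmat n * (Fmat n)ᵀ = (2 : ℝ) • (1 : Matrix (ZMod n) (ZMod n) ℝ) + (cycleGraph n).adjMatrix ℝ := by
  have h1 : (1 : ZMod n) ≠ 0 := by
    intro h
    have : ((1 : ℕ) : ZMod n) = 0 := by exact_mod_cast h
    rw [ZMod.natCast_eq_zero_iff] at this
    have := Nat.le_of_dvd one_pos this
    omega
  have h2 : (2 : ZMod n) ≠ 0 := by
    intro h
    have : ((2 : ℕ) : ZMod n) = 0 := by exact_mod_cast h
    rw [ZMod.natCast_eq_zero_iff] at this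
    have := Nat.le_of_dvd two_pos this
    omega
  ext i k
  rw [Matrix.mul_apply]
  have hsplit : ∀ j : ZMod n, Fmat n i j = (if j = i then (1:ℝ) else 0) + (if j = i - 1 then 1 else 0) := by
    intro j
    simp only [Fmat, Matrix.of_apply]
    by_cases ha : j = i <;> by_cases hb : j = i - 1 <;> simp_all
  have hsplit' : ∀ j : ZMod n, Fmat n k j = (if j = k then (1:ℝ) else 0) + (if j = k - 1 then 1 else 0) := by
    intro j
    simp only [Fmat, Matrix.of_apply]
    by_cases ha : j = k <;> by_cases hb : j = k - 1 <;> simp_all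
  have hdist : ∀ (P : Prop) [Decidable P] (a b : ℝ),
      (if P then a + b else 0) = (if P then a else 0) + (if P then b else 0) := by
    intros P _ a b; split <;> simp
  simp only [Matrix.transpose_apply, hsplit, hsplit', add_mul, mul_add, Finset.sum_add_distrib,
    ite_mul, one_mul, zero_mul, mul_ite, mul_one, mul_zero, hdist]
  have key : ∀ a b : ZMod n, (∑ j : ZMod n, if j = a then (if j = b then (1:ℝ) else 0) else 0)
      = if a = b then 1 else 0 := by
    intro a b
    rw [Finset.sum_ite_eq' Finset.univ a (fun j => if j = b then (1:ℝ) else 0)]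
    simp
  have e1 : (k = i) ↔ (i = k) := eq_comm
  have e2 : (k - 1 = i) ↔ (i = k - 1) := eq_comm
  have e3 : (k = i - 1) ↔ (i - 1 = k) := eq_comm
  have e4 : (k - 1 = i - 1) ↔ (i = k) := by
    constructor <;> intro h <;> linear_combination -h
  have hadj : (cycleGraph n).adjMatrix ℝ i k =
      (if i = k - 1 then (1:ℝ) else 0) + (if i - 1 = k then 1 else 0) := by
    rw [SimpleGraph.adjMatrix_apply]
    simp only [cycleGraph, SimpleGraph.fromRel_adj]
    by_cases hik' : i = k
    · have c1 : ¬ i = k - 1 := fun h => h1 (by linear_combination h - hik')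
      have c2 : ¬ i - 1 = k := fun h => h1 (by linear_combination hik' - h)
      have hc : ¬ (i ≠ k ∧ (k = i + 1 ∨ i = k + 1)) := fun hc => hc.1 hik'
      rw [if_neg hc, if_neg c1, if_neg c2]; norm_num
    · by_cases hA : i = k - 1
      · have hB : ¬ i - 1 = k := fun h => h2 (by linear_combination hA - h)
        have hc : i ≠ k ∧ (k = i + 1 ∨ i = k + 1) := ⟨hik', Or.inl (by linear_combination -hA)⟩
        rw [if_pos hc, if_pos hA, if_neg hB]; norm_num
      · by_cases hB : i - 1 = k
        · have hc : i ≠ k ∧ (k = i + 1 ∨ i = k + 1) := ⟨hik', Or.inr (by linear_combination hB)⟩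
          rw [if_pos hc, if_neg hA, if_pos hB]; norm_num
        · have hc : ¬ (i ≠ k ∧ (k = i + 1 ∨ i = k + 1)) := by
            rintro ⟨-, h | h⟩
            · exact hA (by linear_combination -h)
            · exact hB (by linear_combination h)
          rw [if_neg hc, if_neg hA, if_neg hB]; norm_num
  rw [key, key, key, key, if_congr e1 rfl rfl, if_congr e3 rfl rfl, if_congr e2 rfl rfl,
    if_congr e4 rfl rfl]
  simp only [Matrix.add_apply, Matrix.smul_apply, Matrix.one_apply, hadj, smul_eq_mul]
  ring

/-- The `mn × mn` (0,1)-matrix `M` recording the adjacency between the grid vertices and the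
face vertices of `UJL(n,m)`: the `((i,j),(k,l))`-entry is `1` exactly when
`(k,l) ∈ {(i,j),(i−1,j),(i,j−1),(i−1,j−1)}`. -/
def Mmat (n m : ℕ) : Matrix (ZMod n × ZMod m) (ZMod n × ZMod m) ℝ :=
  Matrix.of fun p q =>
    if (q.1 = p.1 ∧ q.2 = p.2) ∨ (q.1 = p.1 - 1 ∧ q.2 = p.2) ∨
        (q.1 = p.1 ∧ q.2 = p.2 - 1) ∨ (q.1 = p.1 - 1 ∧ q.2 = p.2 - 1) then (1 : ℝ) else 0

/-- For `n, m ≥ 3`,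
`M·Mᵀ = (2·I_m + A(C_m)) ⊗ (2·I_n + A(C_n))` (Kronecker product), under the canonical
identification of the index set `ZMod n × ZMod m` of `M` with the index set
`ZMod m × ZMod n` of the Kronecker product, given by swapping the two coordinates. -/
theorem MMt_eq_kronecker (n m : ℕ) (hn : 3 ≤ n) (hm : 3 ≤ m) :
    haveI : NeZero n := ⟨by omega⟩
    haveI : NeZero m := ⟨by omega⟩
    Mmat n m * (Mmat n m)ᵀ =
      (((2 : ℝ) • (1 : Matrix (ZMod m) (ZMod m) ℝ) + (cycleGraph m).adjMatrix ℝ) ⊗ₖ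
          ((2 : ℝ) • (1 : Matrix (ZMod n) (ZMod n) ℝ) + (cycleGraph n).adjMatrix ℝ)).submatrix
        Prod.swap Prod.swap := by
  haveI : NeZero n := ⟨by omega⟩
  haveI : NeZero m := ⟨by omega⟩
  have hM : Mmat n m = ((Fmat m) ⊗ₖ (Fmat n)).submatrix Prod.swap Prod.swap := by
    ext p q
    simp only [Mmat, Matrix.of_apply, Matrix.submatrix_apply, Prod.fst_swap, Prod.snd_swap,
      kroneckerMap_apply, Fmat]
    by_cases h1 : q.1 = p.1 <;> by_cases h2 : q.1 = p.1 - 1 <;>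
      by_cases h3 : q.2 = p.2 <;> by_cases h4 : q.2 = p.2 - 1 <;>
      simp [h1, h2, h3, h4]
  rw [hM, Matrix.transpose_submatrix, ← kroneckerMap_transpose, ← Equiv.coe_prodComm,
    Matrix.submatrix_mul_equiv, ← Matrix.mul_kronecker_mul, FFt n hn, FFt m hm,
    Equiv.coe_prodComm]
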